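/- The uplink SINR with quantized weighted signals is strictly decreasing in the normalized quantization distortion: fix positive integers M, N, K and k ∈ {1,…,K}, reals ρ > 0, positive matrices β, γ ∈ ℝ^{M×K} with 2β_{mk} ≥ γ_{mk} for all m, nonnegative pilot correlations π_{kk'}, nonnegative powers q ∈ ℝ^K, and nonnegative coefficients u_{1k},…,u_{Mk} with Σ_m u_{mk} γ_{mk} > 0 and q_k > 0. Then the map r ↦ SINR_k^UP(U,q) (with r = σ_ė²/ȧ² appearing in the SINR formula) is strictly decreasing on [0,∞). Consequently the achievable user rate is monotonically increasing in the quantization resolution (equivalently, in the capacity of the fronthaul links), so the optimum of Problem P1 is attained when each fronthaul constraint holds with equality, C_m = C_fh. -/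
import Mathlib


open Finset

/-- The uplink SINR of user `k` with quantized weighted signals, as a function of the
normalized quantization distortion `r = σ_ė²/ȧ²` (equation (38) of the paper). -/
noncomputable def SINRofR {M K : ℕ} (N : ℕ) (ρ : ℝ)
    (β γ u : Matrix (Fin M) (Fin K) ℝ) (π : Fin K → Fin K → ℝ)
    (q : Fin K → ℝ) (k : Fin K) (r : ℝ) : ℝ :=
  (N : ℝ) ^ 2 * q k * (∑ m, u m k * γ m k) ^ 2 /
    ((N : ℝ) ^ 2 * ∑ k' ∈ Finset.univ.erase k,
        q k' * π k k' * (∑ m, u m k * γ m k * β m k' / β m k) ^ 2 +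
      (N : ℝ) * ∑ k', q k' * ∑ m, (u m k) ^ 2 * β m k' *
        (r * (2 * β m k - γ m k) + γ m k) +
      (N : ℝ) / ρ * (r + 1) * ∑ m, (u m k) ^ 2 * γ m k)

/-- The uplink SINR with quantized weighted signals is strictly decreasing in the
normalized quantization distortion `r = σ_ė²/ȧ²` on `[0, ∞)`; consequently the
achievable rate is monotonically increasing in the quantization resolution, so the
optimum of Problem P1 is attained with the fronthaul constraints active. -/
theorem sinr_strictAnti_in_quantization_distortion
    {M K : ℕ} (hM : 0 < M) (hK : 0 < K) (N : ℕ) (hN : 0 < N)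
    (ρ : ℝ) (hρ : 0 < ρ)
    (β γ u : Matrix (Fin M) (Fin K) ℝ)
    (hβ : ∀ m k, 0 < β m k) (hγ : ∀ m k, 0 < γ m k)
    (hβγ : ∀ m k, γ m k ≤ 2 * β m k)
    (π : Fin K → Fin K → ℝ) (hπ : ∀ k k', 0 ≤ π k k')
    (q : Fin K → ℝ) (hq : ∀ k', 0 ≤ q k')
    (k : Fin K) (hu : ∀ m, 0 ≤ u m k)
    (huγ : 0 < ∑ m, u m k * γ m k) (hqk : 0 < q k) :
    StrictAntiOn (SINRofR N ρ β γ u π q k) (Set.Ici (0 : ℝ)) := by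
  intro a ha b hb hab
  simp only [Set.mem_Ici] at ha hb
  have hNpos : (0 : ℝ) < (N : ℝ) := by exact_mod_cast hN
  -- some m0 has positive coefficient
  obtain ⟨m0, hm0⟩ : ∃ m, 0 < u m k := by
    by_contra h
    push_neg at h
    have hz : ∀ m, u m k = 0 := fun m => le_antisymm (h m) (hu m)
    have : (∑ m, u m k * γ m k) = 0 := by
      apply Finset.sum_eq_zero; intro m _; rw [hz m]; ring
    linarith
  have hS : 0 < ∑ m, (u m k) ^ 2 * γ m k := by
    apply Finset.sum_pos' (fun m _ => mul_nonneg (sq_nonneg _) (hγ m k).le)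
    exact ⟨m0, Finset.mem_univ _, mul_pos (pow_pos hm0 2) (hγ m0 k)⟩
  -- numerator positive
  have hA : 0 < (N : ℝ) ^ 2 * q k * (∑ m, u m k * γ m k) ^ 2 := by positivity
  -- define the denominator pieces
  set T1 : ℝ := (N : ℝ) ^ 2 * ∑ k' ∈ Finset.univ.erase k,
      q k' * π k k' * (∑ m, u m k * γ m k * β m k' / β m k) ^ 2 with hT1
  have hT1nn : 0 ≤ T1 := by
    apply mul_nonneg (by positivity)
    apply Finset.sum_nonneg; intro k' _
    have := hq k'; have := hπ k k'; positivity
  have hT2 : ∀ r : ℝ, 0 ≤ r →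
      0 ≤ (N : ℝ) * ∑ k', q k' * ∑ m, (u m k) ^ 2 * β m k' *
        (r * (2 * β m k - γ m k) + γ m k) := by
    intro r hr
    apply mul_nonneg hNpos.le
    apply Finset.sum_nonneg; intro k' _
    apply mul_nonneg (hq k')
    apply Finset.sum_nonneg; intro m _
    have h1 := hβ m k'; have h2 := hβγ m k; have h3 := hγ m k
    have : 0 ≤ r * (2 * β m k - γ m k) + γ m k := by nlinarith
    positivity
  have hT2mono : ((N : ℝ) * ∑ k', q k' * ∑ m, (u m k) ^ 2 * β m k' *
        (a * (2 * β m k - γ m k) + γ m k)) ≤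
      (N : ℝ) * ∑ k', q k' * ∑ m, (u m k) ^ 2 * β m k' *
        (b * (2 * β m k - γ m k) + γ m k) := by
    apply mul_le_mul_of_nonneg_left _ hNpos.le
    apply Finset.sum_le_sum; intro k' _
    apply mul_le_mul_of_nonneg_left _ (hq k')
    apply Finset.sum_le_sum; intro m _
    have h1 := hβ m k'; have h2 := hβγ m k; have h3 := hu m
    nlinarith [mul_nonneg (mul_nonneg (sq_nonneg (u m k)) h1.le) (mul_nonneg (sub_nonneg.2 hab.le) (sub_nonneg.2 h2))]
  have hT3lt : (N : ℝ) / ρ * (a + 1) * ∑ m, (u m k) ^ 2 * γ m k <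
      (N : ℝ) / ρ * (b + 1) * ∑ m, (u m k) ^ 2 * γ m k := by
    have hc : 0 < (N : ℝ) / ρ := by positivity
    have : (N : ℝ) / ρ * (a + 1) < (N : ℝ) / ρ * (b + 1) :=
      mul_lt_mul_of_pos_left (by linarith) hc
    exact mul_lt_mul_of_pos_right this hS
  have hT3a : 0 < (N : ℝ) / ρ * (a + 1) * ∑ m, (u m k) ^ 2 * γ m k := by
    have : 0 < a + 1 := by linarith
    positivity
  have hDa : 0 < T1 + (N : ℝ) * ∑ k', q k' * ∑ m, (u m k) ^ 2 * β m k' *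
        (a * (2 * β m k - γ m k) + γ m k) +
      (N : ℝ) / ρ * (a + 1) * ∑ m, (u m k) ^ 2 * γ m k := by
    have := hT2 a ha; linarith
  have hDab : T1 + (N : ℝ) * ∑ k', q k' * ∑ m, (u m k) ^ 2 * β m k' *
        (a * (2 * β m k - γ m k) + γ m k) +
      (N : ℝ) / ρ * (a + 1) * ∑ m, (u m k) ^ 2 * γ m k <
      T1 + (N : ℝ) * ∑ k', q k' * ∑ m, (u m k) ^ 2 * β m k' *
        (b * (2 * β m k - γ m k) + γ m k) +
      (N : ℝ) / ρ * (b + 1) * ∑ m, (u m k) ^ 2 * γ m k := by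
    linarith
  unfold SINRofR
  rw [← hT1]
  exact div_lt_div_of_pos_left hA hDa hDab
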